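/- Let (X, P) solve the extremal system and let t0 be a time at which Φ(t0) = 0, x2(t0) ≠ 0, and the normal Pontryagin Hamiltonian vanishes: H_P(t0) = Δ(x1 p2 − x2 p1)(t0) + u(t0) Φ(t0) − x1(t0)²/2 = 0. Then p3(t0) = (x3(t0)/x2(t0)) p2(t0), the quantity Δ(x1 p2 − x2 p1)(t0) equals x1(t0)²/2, and the derivative of the switching function satisfies Φ̇(t0) = x3(t0) x1(t0)² / (2 x2(t0)). -/

import Mathlib

open Set

/-- If at a time t0 one has Φ(t0) = 0, x2(t0) ≠ 0 and the normal
Pontryagin Hamiltonian H_P = Δ(x1 p2 − x2 p1) + u Φ − x1²/2 vanishes at t0, then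
p3(t0) = (x3(t0)/x2(t0)) p2(t0), Δ(x1 p2 − x2 p1)(t0) = x1(t0)²/2, and the switching
function has derivative Φ̇(t0) = x3(t0) x1(t0)² / (2 x2(t0)). -/
theorem switching_deriv_at_switching_time
    (Δ : ℝ) (hΔ : Δ ≠ 0) (a b : ℝ) (hab : a < b)
    (u x1 x2 x3 p1 p2 p3 : ℝ → ℝ)
    (hu : ContinuousOn u (Ioo a b))
    (hx1 : ∀ t ∈ Ioo a b, HasDerivAt x1 (-Δ * x2 t) t)
    (hx2 : ∀ t ∈ Ioo a b, HasDerivAt x2 (Δ * x1 t - u t * x3 t) t)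
    (hx3 : ∀ t ∈ Ioo a b, HasDerivAt x3 (u t * x2 t) t)
    (hp1 : ∀ t ∈ Ioo a b, HasDerivAt p1 (-Δ * p2 t + x1 t) t)
    (hp2 : ∀ t ∈ Ioo a b, HasDerivAt p2 (Δ * p1 t - u t * p3 t) t)
    (hp3 : ∀ t ∈ Ioo a b, HasDerivAt p3 (u t * p2 t) t)
    (t0 : ℝ) (ht0 : t0 ∈ Ioo a b)
    (hΦ : p3 t0 * x2 t0 - p2 t0 * x3 t0 = 0)
    (hx2t0 : x2 t0 ≠ 0)
    (hH : Δ * (x1 t0 * p2 t0 - x2 t0 * p1 t0)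
        + u t0 * (p3 t0 * x2 t0 - p2 t0 * x3 t0) - x1 t0 ^ 2 / 2 = 0) :
    p3 t0 = (x3 t0 / x2 t0) * p2 t0 ∧
    Δ * (x1 t0 * p2 t0 - x2 t0 * p1 t0) = x1 t0 ^ 2 / 2 ∧
    HasDerivAt (fun s => p3 s * x2 s - p2 s * x3 s)
      (x3 t0 * x1 t0 ^ 2 / (2 * x2 t0)) t0 := by
  have h1 : p3 t0 = (x3 t0 / x2 t0) * p2 t0 := by
    field_simp
    linarith [hΦ]
  have h2 : Δ * (x1 t0 * p2 t0 - x2 t0 * p1 t0) = x1 t0 ^ 2 / 2 := by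
    rw [hΦ] at hH; linarith
  refine ⟨h1, h2, ?_⟩
  have hd : HasDerivAt (fun s => p3 s * x2 s - p2 s * x3 s)
      ((u t0 * p2 t0) * x2 t0 + p3 t0 * (Δ * x1 t0 - u t0 * x3 t0)
        - ((Δ * p1 t0 - u t0 * p3 t0) * x3 t0 + p2 t0 * (u t0 * x2 t0))) t0 :=
    ((hp3 t0 ht0).mul (hx2 t0 ht0)).sub ((hp2 t0 ht0).mul (hx3 t0 ht0))
  convert hd using 1
  rw [h1]
  field_simp
  linear_combination (-2) * x3 t0 * h2
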